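/- Positivity of the partition function at small negative activities: if μ, p : P → ℝ≥0 satisfy p_x · Z_{Γ*(x)}(μ) ≤ μ_x for all x ∈ P, then Z_Λ(−p) > 0 for every Λ ⊆ P, and moreover for every x ∈ Λ, Z_{Λ\{x}}(−p) ≤ (1 + μ_x) · Z_Λ(−p). -/

import Mathlib

open Finset

def indepSet {P : Type*} [DecidableEq P] (W : P → P → ℕ) (S : Finset P) : Prop :=
  ∀ x ∈ S, ∀ y ∈ S, x ≠ y → W x y = 1

instance {P : Type*} [DecidableEq P] (W : P → P → ℕ) : DecidablePred (indepSet W) :=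
  fun _ => by unfold indepSet; infer_instance

/-- Polymer partition function `Z_Λ(a) = Σ_{S ⊆ Λ independent} Π_{y ∈ S} a y`. -/
def Zpart {P : Type*} [DecidableEq P] {R : Type*} [CommRing R] (W : P → P → ℕ)
    (Λ : Finset P) (a : P → R) : R :=
  ∑ S ∈ Λ.powerset.filter (indepSet W), ∏ y ∈ S, a y

/-- `Γ*(x)`: the set of polymers incompatible with `x`. -/
def Γstar {P : Type*} [Fintype P] [DecidableEq P] (W : P → P → ℕ) (x : P) : Finset P :=
  Finset.univ.filter fun y => W x y = 0

section Aux

variable {P : Type*} [Fintype P] [DecidableEq P]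

lemma indep_mono {W : P → P → ℕ} {S T : Finset P} (h : S ⊆ T) (hT : indepSet W T) :
    indepSet W S := fun a ha b hb hab => hT a (h ha) b (h hb) hab

lemma mem_Γstar {W : P → P → ℕ} {x z : P} : z ∈ Γstar W x ↔ W x z = 0 := by
  simp [Γstar]

lemma zpart_nonneg (W : P → P → ℕ) (S : Finset P) {μ : P → ℝ} (hμ : ∀ y, 0 ≤ μ y) :
    0 ≤ Zpart W S μ :=
  Finset.sum_nonneg fun T _ => Finset.prod_nonneg fun y _ => hμ y

lemma one_le_zpart (W : P → P → ℕ) (S : Finset P) {μ : P → ℝ} (hμ : ∀ y, 0 ≤ μ y) :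
    1 ≤ Zpart W S μ := by
  have h0 : (∅ : Finset P) ∈ S.powerset.filter (indepSet W) := by
    refine mem_filter.2 ⟨empty_mem_powerset S, ?_⟩
    intro a ha; simp at ha
  have := Finset.single_le_sum (f := fun T => ∏ y ∈ T, μ y)
    (fun T _ => Finset.prod_nonneg fun y _ => hμ y) h0
  simpa [Zpart] using this

lemma zpart_pos (W : P → P → ℕ) (S : Finset P) {μ : P → ℝ} (hμ : ∀ y, 0 ≤ μ y) :
    0 < Zpart W S μ := lt_of_lt_of_le one_pos (one_le_zpart W S hμ)

lemma zpart_mono (W : P → P → ℕ) {A B : Finset P} (h : A ⊆ B) {μ : P → ℝ}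
    (hμ : ∀ y, 0 ≤ μ y) : Zpart W A μ ≤ Zpart W B μ := by
  apply Finset.sum_le_sum_of_subset_of_nonneg
  · intro T hT
    rw [mem_filter, mem_powerset] at hT ⊢
    exact ⟨hT.1.trans h, hT.2⟩
  · intro T _ _
    exact Finset.prod_nonneg fun y _ => hμ y

lemma zpart_union_le (W : P → P → ℕ) (A B : Finset P) {μ : P → ℝ}
    (hμ : ∀ y, 0 ≤ μ y) (hd : Disjoint A B) :
    Zpart W (A ∪ B) μ ≤ Zpart W A μ * Zpart W B μ := by
  classical
  rw [Zpart, Zpart, Zpart, Finset.sum_mul_sum, ← Finset.sum_product']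
  have hsplit : ∀ T ∈ (A ∪ B).powerset.filter (indepSet W),
      (∏ y ∈ T, μ y) = (∏ y ∈ T ∩ A, μ y) * (∏ y ∈ T ∩ B, μ y) := by
    intro T hT
    rw [mem_filter, mem_powerset] at hT
    rw [← Finset.prod_union (hd.mono inter_subset_right inter_subset_right)]
    congr 1
    rw [← Finset.inter_union_distrib_left, Finset.inter_eq_left.2 hT.1]
  rw [Finset.sum_congr rfl hsplit]
  have hinj : Set.InjOn (fun T : Finset P => (T ∩ A, T ∩ B))
      ((A ∪ B).powerset.filter (indepSet W)) := by
    intro T hT T' hT' h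
    rw [Finset.coe_filter] at hT hT'
    simp only [Set.mem_setOf_eq, mem_powerset] at hT hT'
    have h1 : T ∩ A = T' ∩ A := congrArg Prod.fst h
    have h2 : T ∩ B = T' ∩ B := congrArg Prod.snd h
    have e1 : T = T ∩ A ∪ T ∩ B := by
      rw [← Finset.inter_union_distrib_left, Finset.inter_eq_left.2 hT.1]
    have e2 : T' = T' ∩ A ∪ T' ∩ B := by
      rw [← Finset.inter_union_distrib_left, Finset.inter_eq_left.2 hT'.1]
    rw [e1, e2, h1, h2]
  rw [← Finset.sum_image (f := fun pr : Finset P × Finset P => (∏ y ∈ pr.1, μ y) * ∏ y ∈ pr.2, μ y)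
    (fun T hT T' hT' h => hinj hT hT' h)]
  apply Finset.sum_le_sum_of_subset_of_nonneg
  · intro pr hpr
    rw [Finset.mem_image] at hpr
    obtain ⟨T, hT, rfl⟩ := hpr
    rw [mem_filter, mem_powerset] at hT
    rw [Finset.mem_product]
    constructor
    · exact mem_filter.2 ⟨mem_powerset.2 inter_subset_right, indep_mono inter_subset_left hT.2⟩
    · exact mem_filter.2 ⟨mem_powerset.2 inter_subset_right, indep_mono inter_subset_left hT.2⟩
  · intro pr _ _
    exact mul_nonneg (Finset.prod_nonneg fun y _ => hμ y) (Finset.prod_nonneg fun y _ => hμ y)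

/-- Fundamental identity: splitting `Z_N(a)` according to whether the independent set
contains `x`. -/
lemma zpart_split (W : P → P → ℕ) (hsym : ∀ x y, W x y = W y x) (hdiag : ∀ x, W x x = 0)
    (h01 : ∀ x y, W x y = 0 ∨ W x y = 1) (a : P → ℝ) {N : Finset P} {x : P} (hx : x ∈ N) :
    Zpart W N a = Zpart W (N.erase x) a + a x * Zpart W (N \ Γstar W x) a := by
  classical
  rw [Zpart, Zpart, Zpart,
    ← Finset.sum_filter_add_sum_filter_not (N.powerset.filter (indepSet W)) (fun T => x ∈ T)]
  have hxΓ : x ∈ Γstar W x := mem_Γstar.2 (hdiag x)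
  have e1 : (N.powerset.filter (indepSet W)).filter (fun T => ¬ x ∈ T)
      = (N.erase x).powerset.filter (indepSet W) := by
    ext T
    simp only [mem_filter, mem_powerset, Finset.subset_erase]
    tauto
  have e2 : ∑ T ∈ (N.powerset.filter (indepSet W)).filter (fun T => x ∈ T), ∏ y ∈ T, a y
      = a x * ∑ T ∈ (N \ Γstar W x).powerset.filter (indepSet W), ∏ y ∈ T, a y := by
    rw [Finset.mul_sum]
    refine Finset.sum_nbij' (fun T => T.erase x) (fun T => insert x T) ?_ ?_ ?_ ?_ ?_
    · intro T hT
      rw [mem_filter, mem_filter, mem_powerset] at hT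
      obtain ⟨⟨hTN, hind⟩, hxT⟩ := hT
      refine mem_filter.2 ⟨mem_powerset.2 ?_, indep_mono (erase_subset x T) hind⟩
      intro z hz
      rw [Finset.mem_erase] at hz
      rw [Finset.mem_sdiff]
      refine ⟨hTN hz.2, fun hzΓ => ?_⟩
      have : W x z = 1 := hind x hxT z hz.2 (Ne.symm hz.1)
      rw [mem_Γstar.1 hzΓ] at this
      exact absurd this (by norm_num)
    · intro T hT
      rw [mem_filter, mem_powerset] at hT
      obtain ⟨hTN, hind⟩ := hT
      have hxT : x ∉ T := fun hc => (Finset.mem_sdiff.1 (hTN hc)).2 hxΓ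
      refine mem_filter.2 ⟨mem_filter.2 ⟨mem_powerset.2 ?_, ?_⟩, mem_insert_self x T⟩
      · intro z hz
        rcases Finset.mem_insert.1 hz with rfl | hz
        · exact hx
        · exact (Finset.mem_sdiff.1 (hTN hz)).1
      · intro u hu v hv huv
        have hW1 : ∀ z ∈ T, W x z = 1 := by
          intro z hz
          have hzΓ : z ∉ Γstar W x := (Finset.mem_sdiff.1 (hTN hz)).2
          rcases h01 x z with h | h
          · exact absurd (mem_Γstar.2 h) hzΓ
          · exact h
        rcases Finset.mem_insert.1 hu with hux | hu
        · rcases Finset.mem_insert.1 hv with hvx | hv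
          · exact absurd (hux.trans hvx.symm) huv
          · rw [hux]
            exact hW1 v hv
        · rcases Finset.mem_insert.1 hv with hvx | hv
          · rw [hvx, hsym]
            exact hW1 u hu
          · exact hind u hu v hv huv
    · intro T hT
      exact Finset.insert_erase (mem_filter.1 hT).2
    · intro T hT
      rw [mem_filter, mem_powerset] at hT
      have hxT : x ∉ T := fun hc => (Finset.mem_sdiff.1 (hT.1 hc)).2 hxΓ
      exact Finset.erase_insert hxT
    · intro T hT
      exact (Finset.mul_prod_erase T a (mem_filter.1 hT).2).symm
  rw [e1, e2, add_comm]

end Aux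

theorem Zpart_neg_pos {P : Type*} [Fintype P] [DecidableEq P] (W : P → P → ℕ)
    (hsym : ∀ x y, W x y = W y x) (hdiag : ∀ x, W x x = 0)
    (h01 : ∀ x y, W x y = 0 ∨ W x y = 1)
    (μ p : P → ℝ) (hμ : ∀ x, 0 ≤ μ x) (hp : ∀ x, 0 ≤ p x)
    (hFP : ∀ x, p x * Zpart W (Γstar W x) μ ≤ μ x)
    (Λ : Finset P) :
    0 < Zpart W Λ (fun y => -p y) ∧
      ∀ x ∈ Λ, Zpart W (Λ.erase x) (fun y => -p y) ≤ (1 + μ x) * Zpart W Λ (fun y => -p y) := by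
  classical
  set q : Finset P → ℝ := fun M => Zpart W M (fun y => -p y) with hqdef
  set Zm : Finset P → ℝ := fun S => Zpart W S μ with hZdef
  have hZpos : ∀ S : Finset P, 0 < Zm S := fun S => zpart_pos W S hμ
  have hq0 : q ∅ = 1 := by
    have h0 : indepSet W (∅ : Finset P) := by intro a ha; simp at ha
    simp [hqdef, Zpart, Finset.powerset_empty, Finset.filter_singleton, h0]
  set f : Finset P → ℝ := fun S => q (Λ \ S) / Zm S with hfdef
  -- the key claim: every S ⊆ Λ satisfies q (Λ \ S) ≤ Zm S * q Λ
  have key : ∀ S ∈ Λ.powerset, q (Λ \ S) ≤ Zm S * q Λ := by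
    -- maximizers of f over the powerset
    obtain ⟨Smax, hSmaxMem, hSmax⟩ :=
      Finset.exists_max_image Λ.powerset f ⟨∅, empty_mem_powerset Λ⟩
    set M : Finset (Finset P) :=
      Λ.powerset.filter (fun S => ∀ S' ∈ Λ.powerset, f S' ≤ f S) with hMdef
    have hMne : M.Nonempty := ⟨Smax, mem_filter.2 ⟨hSmaxMem, hSmax⟩⟩
    obtain ⟨S₀, hS₀M, hS₀min⟩ := Finset.exists_min_image M Finset.card hMne
    rw [hMdef, mem_filter] at hS₀M
    obtain ⟨hS₀Λ, hS₀max⟩ := hS₀M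
    have hS₀sub : S₀ ⊆ Λ := mem_powerset.1 hS₀Λ
    -- the max value is positive
    have hβpos : 0 < f S₀ := by
      have h1 : f Λ ≤ f S₀ := hS₀max Λ (mem_powerset.2 (subset_refl Λ))
      have h2 : 0 < f Λ := by
        simp only [hfdef, Finset.sdiff_self, hq0]
        exact div_pos one_pos (hZpos Λ)
      exact lt_of_lt_of_le h2 h1
    -- S₀ must be empty
    have hS₀empty : S₀ = ∅ := by
      rcases S₀.eq_empty_or_nonempty with h | ⟨x, hxS₀⟩
      · exact h
      exfalso
      have hxΛ : x ∈ Λ := hS₀sub hxS₀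
      set S' : Finset P := S₀.erase x with hS'def
      set G : Finset P := Γstar W x ∩ Λ with hGdef
      set T : Finset P := S' ∪ G with hTdef
      have hS'Λ : S' ⊆ Λ := (erase_subset x S₀).trans hS₀sub
      have hTΛ : T ⊆ Λ := union_subset hS'Λ inter_subset_right
      have hxΓ : x ∈ Γstar W x := mem_Γstar.2 (hdiag x)
      -- identity:  q (Λ \ S₀) = q (Λ \ S') + p x * q (Λ \ T)
      have hxN : x ∈ Λ \ S' := Finset.mem_sdiff.2 ⟨hxΛ, Finset.notMem_erase x S₀⟩
      have hid := zpart_split W hsym hdiag h01 (fun y => -p y) hxN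
      have hidsets1 : (Λ \ S').erase x = Λ \ S₀ := by
        ext z
        simp only [Finset.mem_erase, Finset.mem_sdiff, hS'def]
        constructor
        · rintro ⟨hzx, hzΛ, hzS'⟩
          exact ⟨hzΛ, fun hzS₀ => hzS' ⟨hzx, hzS₀⟩⟩
        · rintro ⟨hzΛ, hzS₀⟩
          exact ⟨fun he => hzS₀ (he ▸ hxS₀), hzΛ, fun h => hzS₀ h.2⟩
      have hidsets2 : (Λ \ S') \ Γstar W x = Λ \ T := by
        ext z
        simp only [Finset.mem_sdiff, hTdef, Finset.mem_union, hGdef, Finset.mem_inter]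
        tauto
      rw [hidsets1, hidsets2] at hid
      have hqid : q (Λ \ S₀) = q (Λ \ S') + p x * q (Λ \ T) := by
        have : q (Λ \ S') = q (Λ \ S₀) + (-p x) * q (Λ \ T) := hid
        linarith [this]
      -- key inequality on the μ-side:  Zm S' + p x * Zm T ≤ Zm S₀
      have hkeyZ : Zm S' + p x * Zm T ≤ Zm S₀ := by
        have hZid := zpart_split W hsym hdiag h01 μ hxS₀
        -- Zm S₀ = Zm S' + μ x * Zm (S₀ \ Γstar x)
        have hTsplit : T \ Γstar W x = S₀ \ Γstar W x := by
          rw [hTdef, hGdef, hS'def]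
          ext z
          simp only [Finset.mem_sdiff, Finset.mem_union, Finset.mem_inter, Finset.mem_erase]
          constructor
          · rintro ⟨h | h, hzΓ⟩
            · exact ⟨h.2, hzΓ⟩
            · exact absurd h.1 hzΓ
          · rintro ⟨hz, hzΓ⟩
            exact ⟨Or.inl ⟨fun he => hzΓ (he ▸ hxΓ), hz⟩, hzΓ⟩
        have hTcup : (T \ Γstar W x) ∪ (T ∩ Γstar W x) = T := by
          rw [Finset.sdiff_union_inter]
        have hdisj : Disjoint (T \ Γstar W x) (T ∩ Γstar W x) :=
          Finset.sdiff_disjoint.mono_right inter_subset_right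
        have hZT : Zm T ≤ Zm (S₀ \ Γstar W x) * Zm (Γstar W x) := by
          calc Zm T = Zpart W ((T \ Γstar W x) ∪ (T ∩ Γstar W x)) μ := by rw [hTcup]
            _ ≤ Zpart W (T \ Γstar W x) μ * Zpart W (T ∩ Γstar W x) μ :=
                zpart_union_le W _ _ hμ hdisj
            _ ≤ Zm (S₀ \ Γstar W x) * Zm (Γstar W x) := by
                rw [hTsplit]
                exact mul_le_mul_of_nonneg_left
                  (zpart_mono W inter_subset_right hμ)
                  (le_of_lt (zpart_pos W _ hμ))
        have hfp : p x * Zm (Γstar W x) ≤ μ x := hFP x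
        have : p x * Zm T ≤ μ x * Zm (S₀ \ Γstar W x) := by
          calc p x * Zm T ≤ p x * (Zm (S₀ \ Γstar W x) * Zm (Γstar W x)) :=
                mul_le_mul_of_nonneg_left hZT (hp x)
            _ = Zm (S₀ \ Γstar W x) * (p x * Zm (Γstar W x)) := by ring
            _ ≤ Zm (S₀ \ Γstar W x) * μ x :=
                mul_le_mul_of_nonneg_left hfp (le_of_lt (zpart_pos W _ hμ))
            _ = μ x * Zm (S₀ \ Γstar W x) := by ring
        have hZid' : Zm S₀ = Zm S' + μ x * Zm (S₀ \ Γstar W x) := hZid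
        linarith [this, hZid']
      -- strict bound for the S' term
      have hfS'lt : f S' < f S₀ := by
        rcases lt_or_eq_of_le (hS₀max S' (mem_powerset.2 hS'Λ)) with h | h
        · exact h
        exfalso
        have hS'M : S' ∈ M := by
          rw [hMdef, mem_filter]
          exact ⟨mem_powerset.2 hS'Λ, fun S'' hS'' => h ▸ hS₀max S'' hS''⟩
        have := hS₀min S' hS'M
        have hcard : S'.card < S₀.card := Finset.card_erase_lt_of_mem hxS₀
        omega
      have hfmul : ∀ S : Finset P, f S * Zm S = q (Λ \ S) := by
        intro S
        simp only [hfdef]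
        exact div_mul_cancel₀ _ (ne_of_gt (hZpos S))
      have hb1 : q (Λ \ S') < f S₀ * Zm S' := by
        rw [← hfmul S']
        exact mul_lt_mul_of_pos_right hfS'lt (hZpos S')
      have hb2 : q (Λ \ T) ≤ f S₀ * Zm T := by
        rw [← hfmul T]
        exact mul_le_mul_of_nonneg_right (hS₀max T (mem_powerset.2 hTΛ)) (le_of_lt (hZpos T))
      -- combine
      have hcontr : q (Λ \ S₀) < f S₀ * Zm S₀ := by
        calc q (Λ \ S₀) = q (Λ \ S') + p x * q (Λ \ T) := hqid
          _ < f S₀ * Zm S' + p x * (f S₀ * Zm T) := by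
              have := mul_le_mul_of_nonneg_left hb2 (hp x)
              linarith [hb1, this]
          _ = f S₀ * (Zm S' + p x * Zm T) := by ring
          _ ≤ f S₀ * Zm S₀ := mul_le_mul_of_nonneg_left hkeyZ (le_of_lt hβpos)
      have hlt : q (Λ \ S₀) / Zm S₀ < f S₀ := (div_lt_iff₀ (hZpos S₀)).2 hcontr
      have heq : q (Λ \ S₀) / Zm S₀ = f S₀ := by simp only [hfdef]
      rw [heq] at hlt
      exact lt_irrefl _ hlt
    -- conclude key from the maximality of ∅
    intro S hS
    have h1 : f S ≤ f S₀ := hS₀max S hS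
    rw [hS₀empty] at h1
    have hZe : Zm (∅ : Finset P) = 1 := by
      have h0 : indepSet W (∅ : Finset P) := by intro a ha; simp at ha
      simp [hZdef, Zpart, Finset.powerset_empty, Finset.filter_singleton, h0]
    have hfempty : f (∅ : Finset P) = q Λ := by
      simp only [hfdef, Finset.sdiff_empty, hZe, div_one]
    rw [hfempty] at h1
    simp only [hfdef] at h1
    have h2 := (div_le_iff₀ (hZpos S)).1 h1
    linarith [h2]
  -- positivity
  have hqΛpos : 0 < q Λ := by
    have h1 := key Λ (mem_powerset.2 (subset_refl Λ))
    rw [Finset.sdiff_self, hq0] at h1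
    by_contra hle
    push_neg at hle
    have : Zm Λ * q Λ ≤ 0 := mul_nonpos_of_nonneg_of_nonpos (le_of_lt (hZpos Λ)) hle
    linarith
  refine ⟨hqΛpos, ?_⟩
  intro x hxΛ
  -- erase bound
  have hid := zpart_split W hsym hdiag h01 (fun y => -p y) hxΛ
  have hqer : q (Λ.erase x) = q Λ + p x * q (Λ \ Γstar W x) := by
    have : q Λ = q (Λ.erase x) + (-p x) * q (Λ \ Γstar W x) := hid
    linarith [this]
  have hG : Λ \ (Γstar W x ∩ Λ) = Λ \ Γstar W x := by
    ext z
    simp only [Finset.mem_sdiff, Finset.mem_inter]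
    tauto
  have hk := key (Γstar W x ∩ Λ) (mem_powerset.2 inter_subset_right)
  rw [hG] at hk
  have hZG : Zm (Γstar W x ∩ Λ) ≤ Zm (Γstar W x) := zpart_mono W inter_subset_left hμ
  have hfin : p x * q (Λ \ Γstar W x) ≤ μ x * q Λ := by
    calc p x * q (Λ \ Γstar W x) ≤ p x * (Zm (Γstar W x ∩ Λ) * q Λ) :=
          mul_le_mul_of_nonneg_left hk (hp x)
      _ = (p x * Zm (Γstar W x ∩ Λ)) * q Λ := by ring
      _ ≤ (p x * Zm (Γstar W x)) * q Λ := by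
          apply mul_le_mul_of_nonneg_right _ (le_of_lt hqΛpos)
          exact mul_le_mul_of_nonneg_left hZG (hp x)
      _ ≤ μ x * q Λ := mul_le_mul_of_nonneg_right (hFP x) (le_of_lt hqΛpos)
  show q (Λ.erase x) ≤ (1 + μ x) * q Λ
  rw [hqer]
  linarith [hfin]
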